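/- Inductive step of the thorough querying lemma: in the setting below, suppose the query sampling is thorough, the model (w_0, f̂_δ) is stepwise-optimal, and sequence-optimality holds for all times t ≤ n (i.e., for all t ≤ n, all q with S_{q,t} > 0, and all positive-probability histories i_{1..t}, μ(A_{q,t} | w_t = ŵ_t(i_{1..t})) = μ(A_{q,t} | I_{1..t} = i_{1..t})). Then sequence-optimality holds at time n + 1: for every query q with S_{q,n+1} > 0 and every instruction history i_{1..n+1} with μ(I_{1..n+1} = i_{1..n+1}) > 0, μ(A_{q,n+1} | w_{n+1} = ŵ_{n+1}(i_{1..n+1})) = μ(A_{q,n+1} | I_{1..n+1} = i_{1..n+1}), where ŵ_t(i_{1..t}) denotes the deterministic value of w_t along the history i_{1..t}. -/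
import Mathlib


open MeasureTheory ProbabilityTheory

variable {Ω 𝓘 𝓠 𝓦 : Type*}

/-- The event that the instruction history up to time `n` equals `i₁, …, iₙ`
(only the times `1 ≤ t ≤ n` matter). -/
def histEvent (I : ℕ → Ω → Finset 𝓘) (i : ℕ → Finset 𝓘) (n : ℕ) : Set Ω :=
  {ω | ∀ t, 1 ≤ t → t ≤ n → I t ω = i t}

/-- The random world states `w_t`, defined recursively from the fixed initial state `w0`
and the deterministic updater `fδ` by `w_t = fδ (w_{t-1}, I_t)`. -/
def wseq (w0 : 𝓦) (fδ : 𝓦 → Finset 𝓘 → 𝓦) (I : ℕ → Ω → Finset 𝓘) : ℕ → Ω → 𝓦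
  | 0 => fun _ => w0
  | t + 1 => fun ω => fδ (wseq w0 fδ I t ω) (I (t + 1) ω)

/-- The deterministic value `ŵ_t(i_{1..t})` of the world state along the fixed history `i`. -/
def detW (w0 : 𝓦) (fδ : 𝓦 → Finset 𝓘 → 𝓦) (i : ℕ → Finset 𝓘) : ℕ → 𝓦
  | 0 => w0
  | t + 1 => fδ (detW w0 fδ i t) (i (t + 1))

/-- `q` is a recall query, at query time `t'`, for the instruction `v` received at time
`t ≤ t'`: for every positive-probability instruction history `i_{1..t'}` with `v ∈ i_t`,
the answer to `q` at time `t'` is almost surely `True` given the history, and almost surely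
`False` given the history with `v` removed from `i_t` (whenever the latter conditioning
event has positive probability). -/
def IsRecallQuery [MeasurableSpace Ω] [DecidableEq 𝓘] (μ : Measure Ω)
    (I : ℕ → Ω → Finset 𝓘) (A : 𝓠 → ℕ → Set Ω) (q : 𝓠) (v : 𝓘) (t t' : ℕ) : Prop :=
  t ≤ t' ∧
  (∀ i : ℕ → Finset 𝓘, v ∈ i t → 0 < μ (histEvent I i t') →
      μ[A q t' | histEvent I i t'] = 1) ∧
  (∀ i : ℕ → Finset 𝓘, v ∈ i t →
      0 < μ (histEvent I (Function.update i t (i t \ {v})) t') →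
      μ[A q t' | histEvent I (Function.update i t (i t \ {v})) t'] = 0)

/-- The query sampling is thorough: for every positive-probability instruction history
`i_{1..n}`, every time `1 ≤ t ≤ n`, every instruction `v ∈ i_t`, and every `t' ≥ t`,
there is a recall query for `v` at times `(t, t')` with positive sampling probability. -/
def Thorough [MeasurableSpace Ω] [DecidableEq 𝓘] (μ : Measure Ω)
    (I : ℕ → Ω → Finset 𝓘) (A : 𝓠 → ℕ → Set Ω) (S : 𝓠 → ℕ → ℝ) : Prop :=
  ∀ (n : ℕ) (i : ℕ → Finset 𝓘), 0 < μ (histEvent I i n) →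
    ∀ t, 1 ≤ t → t ≤ n → ∀ v ∈ i t, ∀ t', t ≤ t' →
      ∃ q : 𝓠, IsRecallQuery μ I A q v t t' ∧ 0 < S q t'

/-- The model `(w0, fδ)` is stepwise-optimal: at every time `t + 1`, for every query with
positive sampling probability and every positive-probability pair (previous world state,
incoming instruction set), conditioning on the updated world state gives the same
probability as conditioning on the previous world state and the incoming instructions. -/
def StepwiseOptimal [MeasurableSpace Ω] (μ : Measure Ω)
    (I : ℕ → Ω → Finset 𝓘) (A : 𝓠 → ℕ → Set Ω) (S : 𝓠 → ℕ → ℝ)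
    (w0 : 𝓦) (fδ : 𝓦 → Finset 𝓘 → 𝓦) : Prop :=
  ∀ (t : ℕ) (q : 𝓠), 0 < S q (t + 1) →
    ∀ (w : 𝓦) (s : Finset 𝓘),
      0 < μ ({ω | wseq w0 fδ I t ω = w} ∩ {ω | I (t + 1) ω = s}) →
      μ[A q (t + 1) | {ω | wseq w0 fδ I (t + 1) ω = fδ w s}]
        = μ[A q (t + 1) | {ω | wseq w0 fδ I t ω = w} ∩ {ω | I (t + 1) ω = s}]


private lemma cond_congr' [Countable Ω] [MeasurableSpace Ω] [MeasurableSingletonClass Ω]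
    (μ : Measure Ω) {H B : Set Ω} (hsub : H ⊆ B) (hnull : μ (B \ H) = 0) (s : Set Ω) :
    μ[s | B] = μ[s | H] := by
  have hB : MeasurableSet B := B.to_countable.measurableSet
  have hH : MeasurableSet H := H.to_countable.measurableSet
  have hBH : μ B = μ H := by
    conv_lhs => rw [← Set.union_diff_cancel hsub]
    refine le_antisymm ((measure_union_le _ _).trans ?_) (measure_mono Set.subset_union_left)
    rw [hnull, add_zero]
  have hBs : μ (B ∩ s) = μ (H ∩ s) := by
    have h1 : B ∩ s = (H ∩ s) ∪ ((B \ H) ∩ s) := by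
      rw [← Set.union_inter_distrib_right, Set.union_diff_cancel hsub]
    rw [h1]
    refine le_antisymm ((measure_union_le _ _).trans ?_) (measure_mono Set.subset_union_left)
    rw [measure_mono_null Set.inter_subset_left hnull, add_zero]
  rw [cond_apply hB, cond_apply hH, hBH, hBs]

private lemma null_of_singletons [Countable Ω] [MeasurableSpace Ω]
    (μ : Measure Ω) {s : Set Ω} (h : ∀ ω ∈ s, μ {ω} = 0) : μ s = 0 := by
  have hs : s ⊆ ⋃ ω ∈ s, {ω} := fun ω hω => Set.mem_biUnion hω rfl
  exact measure_mono_null hs ((measure_biUnion_null_iff s.to_countable).2 h)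

private lemma wseq_eq_detW (w0 : 𝓦) (fδ : 𝓦 → Finset 𝓘 → 𝓦) (I : ℕ → Ω → Finset 𝓘)
    (i : ℕ → Finset 𝓘) : ∀ n (ω : Ω), ω ∈ histEvent I i n →
      wseq w0 fδ I n ω = detW w0 fδ i n
  | 0, ω, _ => rfl
  | n+1, ω, h => by
    have hn : ω ∈ histEvent I i n := fun t h1 h2 => h t h1 (h2.trans n.le_succ)
    show fδ (wseq w0 fδ I n ω) (I (n+1) ω) = fδ (detW w0 fδ i n) (i (n+1))
    rw [wseq_eq_detW w0 fδ I i n ω hn, h (n+1) (Nat.succ_le_succ n.zero_le) le_rfl]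

private lemma key_contradiction [Countable Ω] [MeasurableSpace Ω] [MeasurableSingletonClass Ω]
    [DecidableEq 𝓘]
    (μ : Measure Ω) [IsProbabilityMeasure μ]
    (I : ℕ → Ω → Finset 𝓘) (A : 𝓠 → ℕ → Set Ω) (S : 𝓠 → ℕ → ℝ)
    (w0 : 𝓦) (fδ : 𝓦 → Finset 𝓘 → 𝓦) (n : ℕ)
    (hT : Thorough μ I A S)
    (hInd : ∀ t, 1 ≤ t → t ≤ n → ∀ q : 𝓠, 0 < S q t → ∀ i : ℕ → Finset 𝓘,
        0 < μ (histEvent I i t) →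
        μ[A q t | {ω | wseq w0 fδ I t ω = detW w0 fδ i t}]
          = μ[A q t | histEvent I i t])
    (i j : ℕ → Finset 𝓘) (hi : 0 < μ (histEvent I i n)) (hj : 0 < μ (histEvent I j n))
    (hdet : detW w0 fδ j n = detW w0 fδ i n) {t : ℕ} (h1 : 1 ≤ t) (h2 : t ≤ n)
    {v : 𝓘} (hvj : v ∈ j t) (hvi : v ∉ i t) : False := by
  obtain ⟨q, ⟨-, hq1, hq0⟩, hSq⟩ := hT n j hj t h1 h2 v hvj n h2
  have e1 : μ[A q n | histEvent I j n] = 1 := hq1 j hvj hj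
  set i' : ℕ → Finset 𝓘 := Function.update i t (insert v (i t)) with hi'
  have hv' : v ∈ i' t := by simp [hi']
  have hupd : Function.update i' t (i' t \ {v}) = i := by
    funext s
    rcases eq_or_ne s t with rfl | hs
    · simp [hi', Finset.sdiff_singleton_eq_erase, Finset.erase_insert hvi]
    · simp [hi', Function.update_of_ne hs]
  have e0 : μ[A q n | histEvent I i n] = 0 := by
    have := hq0 i' hv' (by rw [hupd]; exact hi)
    rwa [hupd] at this
  have hn1 : 1 ≤ n := h1.trans h2
  have E1 : μ[A q n | {ω | wseq w0 fδ I n ω = detW w0 fδ j n}] = 1 :=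
    (hInd n hn1 le_rfl q hSq j hj).trans e1
  have E0 : μ[A q n | {ω | wseq w0 fδ I n ω = detW w0 fδ i n}] = 0 :=
    (hInd n hn1 le_rfl q hSq i hi).trans e0
  rw [hdet, E0] at E1
  exact zero_ne_one E1

/-- **Inductive step of the thorough querying lemma.** Suppose the query sampling is
thorough, the model `(w0, fδ)` is stepwise-optimal, and sequence-optimality holds for all
times `1 ≤ t ≤ n`. Then sequence-optimality holds at time `n + 1`. -/
theorem sequenceOptimal_inductive_step
    [Countable Ω] [MeasurableSpace Ω] [MeasurableSingletonClass Ω]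
    [Countable 𝓘] [DecidableEq 𝓘]
    (μ : Measure Ω) [IsProbabilityMeasure μ]
    (I : ℕ → Ω → Finset 𝓘) (A : 𝓠 → ℕ → Set Ω) (S : 𝓠 → ℕ → ℝ)
    (w0 : 𝓦) (fδ : 𝓦 → Finset 𝓘 → 𝓦) (n : ℕ)
    (hT : Thorough μ I A S)
    (hS : StepwiseOptimal μ I A S w0 fδ)
    (hInd : ∀ t, 1 ≤ t → t ≤ n → ∀ q : 𝓠, 0 < S q t → ∀ i : ℕ → Finset 𝓘,
        0 < μ (histEvent I i t) →
        μ[A q t | {ω | wseq w0 fδ I t ω = detW w0 fδ i t}]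
          = μ[A q t | histEvent I i t]) :
    ∀ q : 𝓠, 0 < S q (n + 1) → ∀ i : ℕ → Finset 𝓘,
      0 < μ (histEvent I i (n + 1)) →
      μ[A q (n + 1) | {ω | wseq w0 fδ I (n + 1) ω = detW w0 fδ i (n + 1)}]
        = μ[A q (n + 1) | histEvent I i (n + 1)] := by
  intro q hSq i hpos
  have hhsub : histEvent I i (n+1) ⊆ histEvent I i n :=
    fun ω h t h1 h2 => h t h1 (h2.trans n.le_succ)
  have hposn : 0 < μ (histEvent I i n) := lt_of_lt_of_le hpos (measure_mono hhsub)
  set B : Set Ω := {ω | wseq w0 fδ I n ω = detW w0 fδ i n} ∩ {ω | I (n+1) ω = i (n+1)}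
    with hBdef
  have hsub : histEvent I i (n+1) ⊆ B := fun ω h =>
    ⟨wseq_eq_detW w0 fδ I i n ω (hhsub h), h (n+1) (Nat.succ_le_succ n.zero_le) le_rfl⟩
  have hposB : 0 < μ B := lt_of_lt_of_le hpos (measure_mono hsub)
  have step := hS n q hSq (detW w0 fδ i n) (i (n+1)) hposB
  have hnull : μ (B \ histEvent I i (n+1)) = 0 := by
    apply null_of_singletons
    intro ω hω
    by_contra hne
    have hωpos : 0 < μ {ω} := pos_iff_ne_zero.mpr hne
    set j : ℕ → Finset 𝓘 := fun t => I t ω with hjdef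
    have hjmem : ω ∈ histEvent I j (n+1) := fun t _ _ => rfl
    have hjpos : 0 < μ (histEvent I j n) := by
      refine lt_of_lt_of_le hωpos (measure_mono (Set.singleton_subset_iff.2 ?_))
      exact fun t h1 h2 => rfl
    have hdet : detW w0 fδ j n = detW w0 fδ i n := by
      rw [← wseq_eq_detW w0 fδ I j n ω (fun t _ _ => rfl)]
      exact hω.1.1
    refine hω.2 (fun t h1 h2 => ?_)
    rcases Nat.lt_succ_iff_lt_or_eq.mp (Nat.lt_succ_of_le h2) with hlt | rfl
    · have h2' : t ≤ n := Nat.lt_succ_iff.mp hlt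
      show j t = i t
      by_contra hne'
      have hcases : ¬ (j t ⊆ i t) ∨ ¬ (i t ⊆ j t) := by
        by_contra hc
        push_neg at hc
        exact hne' (Finset.Subset.antisymm hc.1 hc.2)
      rcases hcases with hns | hns
      · obtain ⟨v, hvj, hvi⟩ := Finset.not_subset.mp hns
        exact key_contradiction μ I A S w0 fδ n hT hInd i j hposn hjpos hdet h1 h2' hvj hvi
      · obtain ⟨v, hvi, hvj⟩ := Finset.not_subset.mp hns
        exact key_contradiction μ I A S w0 fδ n hT hInd j i hjpos hposn hdet.symm h1 h2' hvi hvj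
    · exact hω.1.2
  have hdetW : detW w0 fδ i (n+1) = fδ (detW w0 fδ i n) (i (n+1)) := rfl
  rw [hdetW]
  exact step.trans (cond_congr' μ hsub hnull (A q (n+1)))
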